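/- arXiv:2009.00572 — 2 statements merged into one kernel-verified Lean document; each statement's English description precedes it below -/
import Mathlib

section
/- Let X_n (n ≥ 1) and X be random elements of C[0,∞], the Banach space of continuous real-valued functions f on [0,∞) for which f(∞) := lim_{t→∞} f(t) exists, equipped with the supremum norm. Then X_n converges in distribution to X in C[0,∞] if and only if both of the following hold: (i) X_n converges in distribution to X in C[0,∞) with the topology of uniform convergence on compact subsets of [0,∞); and (ii) for every ε > 0, sup_{n≥1} P( sup_{u < t < ∞} |X_n(t) − X_n(∞)| > ε ) → 0 as u → ∞. -/
open MeasureTheory Filter Topology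
open scoped NNReal

noncomputable section

/-- `C[0,∞]`: continuous functions on `[0,∞)` having a limit at `∞`, i.e. continuous
functions on the one-point compactification of `[0,∞)`; since the domain is compact, the
canonical (compact-open) topology is that of the supremum norm. -/
abbrev CooInfty := C(OnePoint ℝ≥0, ℝ)

instance : MeasurableSpace CooInfty := borel _

instance : BorelSpace CooInfty := ⟨rfl⟩

/-- restriction to `[0,∞)`, as an element of `C[0,∞)` with the compact-open topology
(uniform convergence on compact sets) -/
def restrictFin (f : CooInfty) : C(ℝ≥0, ℝ) :=
  f.comp ⟨fun t => (t : OnePoint ℝ≥0), OnePoint.continuous_coe⟩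

/-- convergence in distribution of random elements of a topological space: weak convergence
of the laws, i.e. convergence of expectations of all bounded continuous functions -/
def ConvInDist {Ω E : Type*} [MeasurableSpace Ω] [TopologicalSpace E]
    (μ : Measure Ω) (X : ℕ → Ω → E) (Y : Ω → E) : Prop :=
  ∀ f : BoundedContinuousFunction E ℝ,
    Tendsto (fun n => ∫ ω, f (X n ω) ∂μ) atTop (𝓝 (∫ ω, f (Y ω) ∂μ))

/-! ### Auxiliary material -/

open Metric
open scoped BoundedContinuousFunction ENNReal

section Aux

/-- restriction as a continuous map -/
def restrictFinCM : C(CooInfty, C(ℝ≥0, ℝ)) :=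
  ⟨restrictFin, ContinuousMap.continuous_precomp _⟩

lemma tendsto_atTop_coe (g : CooInfty) :
    Tendsto (fun t : ℝ≥0 => g (t : OnePoint ℝ≥0)) atTop (𝓝 (g OnePoint.infty)) := by
  have h := (g.continuous.tendsto OnePoint.infty).comp OnePoint.tendsto_coe_infty
  rwa [Filter.coclosedCompact_eq_cocompact, cocompact_eq_atTop] at h

/-- the set of paths oscillating more than `ε` after time `u` -/
def badSet (u : ℝ≥0) (ε : ℝ) : Set CooInfty :=
  {g | ∃ t : ℝ≥0, u < t ∧ ε < |g (t : OnePoint ℝ≥0) - g OnePoint.infty|}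

lemma isOpen_badSet (u : ℝ≥0) (ε : ℝ) : IsOpen (badSet u ε) := by
  have h : badSet u ε = ⋃ t : ℝ≥0, ⋃ (_ : u < t),
      {g : CooInfty | ε < |g (t : OnePoint ℝ≥0) - g OnePoint.infty|} := by
    ext g; simp [badSet]
  rw [h]
  refine isOpen_iUnion fun t => isOpen_iUnion fun _ => ?_
  have hc : Continuous fun g : CooInfty => |g (t : OnePoint ℝ≥0) - g OnePoint.infty| := by
    apply Continuous.abs
    exact (continuous_eval_const _).sub (continuous_eval_const _)
  exact isOpen_lt continuous_const hc

lemma badSet_anti {u v : ℝ≥0} (h : u ≤ v) (ε : ℝ) : badSet v ε ⊆ badSet u ε :=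
  fun g ⟨t, ht, h'⟩ => ⟨t, lt_of_le_of_lt h ht, h'⟩

lemma closure_badSet_subset {u : ℝ≥0} {ε : ℝ} (hε : 0 < ε) :
    closure (badSet u ε) ⊆ badSet u (ε/2) := by
  intro g hg
  rcases Metric.mem_closure_iff.mp hg (ε/4) (by linarith) with ⟨h, hmem, hdist⟩
  rcases hmem with ⟨t, ht, habs⟩
  refine ⟨t, ht, ?_⟩
  have h1 : dist (g (t : OnePoint ℝ≥0)) (h (t : OnePoint ℝ≥0)) ≤ dist g h :=
    ContinuousMap.dist_apply_le_dist _
  have h2 : dist (g OnePoint.infty) (h OnePoint.infty) ≤ dist g h :=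
    ContinuousMap.dist_apply_le_dist _
  rw [Real.dist_eq] at h1 h2
  have h0 := abs_sub_abs_le_abs_sub (h (t : OnePoint ℝ≥0) - h OnePoint.infty)
    (g (t : OnePoint ℝ≥0) - g OnePoint.infty)
  have h3 : |h (t : OnePoint ℝ≥0) - h OnePoint.infty - (g (t : OnePoint ℝ≥0) - g OnePoint.infty)|
      ≤ ε/4 + ε/4 := by
    calc |h (t : OnePoint ℝ≥0) - h OnePoint.infty - (g (t : OnePoint ℝ≥0) - g OnePoint.infty)|
        = |(h (t : OnePoint ℝ≥0) - g (t : OnePoint ℝ≥0)) - (h OnePoint.infty - g OnePoint.infty)| := by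
          ring_nf
      _ ≤ |h (t : OnePoint ℝ≥0) - g (t : OnePoint ℝ≥0)| + |h OnePoint.infty - g OnePoint.infty| :=
          abs_sub _ _
      _ ≤ ε/4 + ε/4 := by
          rw [abs_sub_comm (h (t : OnePoint ℝ≥0)), abs_sub_comm (h OnePoint.infty)]
          exact add_le_add (h1.trans hdist.le) (h2.trans hdist.le)
  linarith [h0]

lemma not_mem_badSet_large {g : CooInfty} {ε : ℝ} (hε : 0 < ε) :
    ∃ m : ℕ, g ∉ badSet (m : ℝ≥0) ε := by
  have h := (tendsto_atTop_coe g).eventually (eventually_abs_sub_lt (g OnePoint.infty) hε)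
  rcases eventually_atTop.mp h with ⟨u0, hu0⟩
  rcases exists_nat_ge u0 with ⟨m, hm⟩
  refine ⟨m, ?_⟩
  rintro ⟨t, ht, habs⟩
  have := hu0 t (hm.trans ht.le)
  linarith

lemma iInter_badSet {ε : ℝ} (hε : 0 < ε) : (⋂ m : ℕ, badSet (m : ℝ≥0) ε) = ∅ := by
  ext g
  simp only [Set.mem_iInter, Set.mem_empty_iff_false, iff_false, not_forall]
  exact (not_mem_badSet_large hε).imp fun m hm => hm

/-- truncation time-change on the one-point compactification -/
def theta (u : ℝ≥0) : C(OnePoint ℝ≥0, ℝ≥0) :=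
  OnePoint.continuousMapMk ⟨fun t => min t u, by fun_prop⟩ u (by
    rw [Filter.coclosedCompact_eq_cocompact, cocompact_eq_atTop]
    refine Tendsto.congr' ?_ tendsto_const_nhds
    filter_upwards [eventually_ge_atTop u] with t ht
    exact (min_eq_right ht).symm)

/-- freezing a path after time `u` -/
def trunc (u : ℝ≥0) : C(C(ℝ≥0, ℝ), CooInfty) :=
  ⟨fun h => h.comp (theta u), ContinuousMap.continuous_precomp (theta u)⟩

lemma abs_at_le {g : CooInfty} {u : ℝ≥0} {ε : ℝ}
    (hg : ∀ t : ℝ≥0, u < t → |g (t : OnePoint ℝ≥0) - g OnePoint.infty| ≤ ε) :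
    |g ((u : ℝ≥0) : OnePoint ℝ≥0) - g OnePoint.infty| ≤ ε := by
  have hcont : ContinuousAt (fun t : ℝ≥0 => |g (t : OnePoint ℝ≥0) - g OnePoint.infty|) u := by
    apply ContinuousAt.abs
    exact ((g.continuous.comp OnePoint.continuous_coe).continuousAt).sub continuousAt_const
  have hne : (𝓝[>] u).NeBot := nhdsGT_neBot u
  have htend : Tendsto (fun t : ℝ≥0 => |g (t : OnePoint ℝ≥0) - g OnePoint.infty|) (𝓝[>] u)
      (𝓝 (|g ((u : ℝ≥0) : OnePoint ℝ≥0) - g OnePoint.infty|)) :=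
    hcont.continuousWithinAt.tendsto
  exact le_of_tendsto htend (eventually_nhdsWithin_of_forall fun t ht => hg t ht)

lemma dist_trunc_le {g : CooInfty} {u : ℝ≥0} {ε : ℝ} (hε : 0 ≤ ε)
    (hg : ∀ t : ℝ≥0, u < t → |g (t : OnePoint ℝ≥0) - g OnePoint.infty| ≤ ε) :
    dist g (trunc u (restrictFin g)) ≤ 2 * ε := by
  rw [ContinuousMap.dist_le (by linarith)]
  intro x
  induction x using OnePoint.rec with
  | infty =>
      show dist (g OnePoint.infty) (g ((u : ℝ≥0) : OnePoint ℝ≥0)) ≤ 2 * ε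
      rw [Real.dist_eq, abs_sub_comm]
      linarith [abs_at_le hg]
  | coe t =>
      show dist (g (t : OnePoint ℝ≥0)) (g ((min t u : ℝ≥0) : OnePoint ℝ≥0)) ≤ 2 * ε
      rcases le_or_gt t u with h | h
      · rw [min_eq_left h, dist_self]; linarith
      · rw [min_eq_right h.le, Real.dist_eq]
        have h1 := hg t h
        have h2 := abs_at_le hg
        have h3 := abs_sub_le (g (t : OnePoint ℝ≥0)) (g OnePoint.infty)
          (g ((u : ℝ≥0) : OnePoint ℝ≥0))
        rw [abs_sub_comm (g OnePoint.infty)] at h3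
        linarith

variable {Ω : Type*} [MeasurableSpace Ω] (μ : Measure Ω) [IsProbabilityMeasure μ]

lemma integrable_comp (f : CooInfty →ᵇ ℝ) {Z : Ω → CooInfty} (hZ : Measurable Z) :
    Integrable (fun ω => f (Z ω)) μ := by
  refine ⟨(f.continuous.measurable.comp hZ).aestronglyMeasurable, ?_⟩
  exact HasFiniteIntegral.of_bounded (C := ‖f‖)
    (Eventually.of_forall fun ω => f.norm_coe_le_norm _)

lemma key_integral_bound (f : CooInfty →ᵇ ℝ) {K : ℝ≥0} (hf : LipschitzWith K f)
    {Z : Ω → CooInfty} (hZ : Measurable Z) (u : ℝ≥0) {ε : ℝ} (hε : 0 < ε) :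
    |(∫ ω, f (Z ω) ∂μ) - ∫ ω, f (trunc u (restrictFin (Z ω))) ∂μ| ≤
      2 * ‖f‖ * (μ (Z ⁻¹' badSet u ε)).toReal + 2 * K * ε := by
  set E := Z ⁻¹' badSet u ε with hE_def
  have hE : MeasurableSet E := hZ (isOpen_badSet u ε).measurableSet
  set G : CooInfty →ᵇ ℝ := f.compContinuous ((trunc u).comp restrictFinCM) with hG
  have i1 : Integrable (fun ω => f (Z ω)) μ := integrable_comp μ f hZ
  have i2 : Integrable (fun ω => f (trunc u (restrictFin (Z ω)))) μ := integrable_comp μ G hZ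
  have ibound : Integrable (fun ω => E.indicator (fun _ => 2 * ‖f‖) ω + 2 * K * ε) μ :=
    ((integrable_const _).indicator hE).add (integrable_const _)
  have hb : ∀ ω, |f (Z ω) - f (trunc u (restrictFin (Z ω)))| ≤
      E.indicator (fun _ => 2 * ‖f‖) ω + 2 * K * ε := by
    intro ω
    by_cases hω : ω ∈ E
    · rw [Set.indicator_of_mem hω]
      have b1 := f.norm_coe_le_norm (Z ω)
      have b2 := f.norm_coe_le_norm (trunc u (restrictFin (Z ω)))
      have hK : (0:ℝ) ≤ 2 * K * ε := by positivity
      calc |f (Z ω) - f (trunc u (restrictFin (Z ω)))|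
          ≤ |f (Z ω)| + |f (trunc u (restrictFin (Z ω)))| := abs_sub _ _
        _ ≤ 2 * ‖f‖ := by rw [← Real.norm_eq_abs, ← Real.norm_eq_abs]; linarith
        _ ≤ 2 * ‖f‖ + 2 * K * ε := by linarith
    · rw [Set.indicator_of_notMem hω, zero_add]
      have hω' : ∀ t : ℝ≥0, u < t → |Z ω (t : OnePoint ℝ≥0) - Z ω OnePoint.infty| ≤ ε := by
        intro t ht
        by_contra hc
        exact hω ⟨t, ht, lt_of_not_ge hc⟩
      have hd := dist_trunc_le hε.le hω'
      have := hf.dist_le_mul (Z ω) (trunc u (restrictFin (Z ω)))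
      rw [Real.dist_eq] at this
      have hK : (0:ℝ) ≤ (K : ℝ) := K.coe_nonneg
      nlinarith [dist_nonneg (x := Z ω) (y := trunc u (restrictFin (Z ω)))]
  calc |(∫ ω, f (Z ω) ∂μ) - ∫ ω, f (trunc u (restrictFin (Z ω))) ∂μ|
      = |∫ ω, (f (Z ω) - f (trunc u (restrictFin (Z ω)))) ∂μ| := by
        rw [integral_sub i1 i2]
    _ ≤ ∫ ω, |f (Z ω) - f (trunc u (restrictFin (Z ω)))| ∂μ := by
        simpa [Real.norm_eq_abs] using
          norm_integral_le_integral_norm (fun ω => f (Z ω) - f (trunc u (restrictFin (Z ω))))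
    _ ≤ ∫ ω, (E.indicator (fun _ => 2 * ‖f‖) ω + 2 * K * ε) ∂μ :=
        integral_mono (i1.sub i2).abs ibound hb
    _ = 2 * ‖f‖ * (μ E).toReal + 2 * K * ε := by
        rw [integral_add ((integrable_const _).indicator hE) (integrable_const _),
          integral_indicator_const _ hE, integral_const]
        simp [measure_univ, smul_eq_mul]
        rw [measureReal_def]
        ring

lemma tendsto_measure_badSet {Z : Ω → CooInfty} (hZ : Measurable Z) {ε : ℝ} (hε : 0 < ε) :
    Tendsto (fun m : ℕ => μ (Z ⁻¹' badSet (m : ℝ≥0) ε)) atTop (𝓝 0) := by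
  have h := tendsto_measure_iInter_atTop (μ := μ)
    (s := fun m : ℕ => Z ⁻¹' badSet (m : ℝ≥0) ε)
    (fun m => (hZ (isOpen_badSet _ _).measurableSet).nullMeasurableSet)
    (fun m m' hmm' => Set.preimage_mono (badSet_anti (by exact_mod_cast hmm') ε))
    ⟨0, measure_ne_top μ _⟩
  have he : (⋂ m : ℕ, Z ⁻¹' badSet (m:ℝ≥0) ε) = ∅ := by
    rw [← Set.preimage_iInter, iInter_badSet hε, Set.preimage_empty]
  rw [he] at h
  simpa [Function.comp_def] using h

end Aux

/-! ### Lipschitz approximations of indicators of closed sets -/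

section LipAppr

def lipAppr (F : Set CooInfty) (k : ℕ) : CooInfty →ᵇ ℝ :=
  BoundedContinuousFunction.ofNormedAddCommGroup
    (fun g => max 0 (1 - (k + 1) * infDist g F))
    (continuous_const.max (continuous_const.sub
      (continuous_const.mul (continuous_infDist_pt F)))) 1 (by
      intro g
      rw [Real.norm_eq_abs, abs_le]
      constructor
      · linarith [le_max_left (0:ℝ) (1 - (k + 1) * infDist g F)]
      · apply max_le (by norm_num)
        have h1 : (0:ℝ) ≤ (k + 1 : ℝ) * infDist g F :=
          mul_nonneg (by positivity) infDist_nonneg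
        linarith)

lemma lipAppr_lipschitz (F : Set CooInfty) (k : ℕ) :
    LipschitzWith ((k:ℝ≥0) + 1) (lipAppr F k) := by
  apply LipschitzWith.of_dist_le_mul
  intro g h
  have h1 : |infDist g F - infDist h F| ≤ dist g h := by
    have := (lipschitz_infDist_pt F).dist_le_mul g h
    rwa [Real.dist_eq, NNReal.coe_one, one_mul] at this
  rw [Real.dist_eq]
  calc |max 0 (1 - (k + 1) * infDist g F) - max 0 (1 - (k + 1) * infDist h F)|
      ≤ |(1 - (k + 1) * infDist g F) - (1 - (k + 1) * infDist h F)| := by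
        rw [max_comm 0 _, max_comm 0 _]; exact abs_max_sub_max_le_abs _ _ _
    _ = ((k:ℝ) + 1) * |infDist g F - infDist h F| := by
        rw [show (1 - ((k:ℝ) + 1) * infDist g F) - (1 - ((k:ℝ)+1) * infDist h F)
            = ((k:ℝ)+1) * (infDist h F - infDist g F) by ring, abs_mul,
          abs_of_nonneg (by positivity : (0:ℝ) ≤ (k:ℝ)+1), abs_sub_comm]
    _ ≤ ((k:ℝ) + 1) * dist g h := by
        apply mul_le_mul_of_nonneg_left h1 (by positivity)
    _ = (((k:ℝ≥0) + 1 : ℝ≥0) : ℝ) * dist g h := by push_cast; ring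

lemma lipAppr_nonneg (F : Set CooInfty) (k : ℕ) (g : CooInfty) : 0 ≤ lipAppr F k g :=
  le_max_left _ _

lemma lipAppr_le_one (F : Set CooInfty) (k : ℕ) (g : CooInfty) : lipAppr F k g ≤ 1 := by
  apply max_le (by norm_num)
  have h1 : (0:ℝ) ≤ (k + 1 : ℝ) * infDist g F :=
    mul_nonneg (by positivity) infDist_nonneg
  linarith

lemma lipAppr_eq_one (F : Set CooInfty) (k : ℕ) {g : CooInfty} (hg : g ∈ F) :
    lipAppr F k g = 1 := by
  show max 0 (1 - (k + 1) * infDist g F) = 1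
  rw [infDist_zero_of_mem hg]
  norm_num

lemma lipAppr_tendsto (F : Set CooInfty) (hF : IsClosed F) (hFne : F.Nonempty) (g : CooInfty) :
    Tendsto (fun k => lipAppr F k g) atTop (𝓝 (F.indicator (fun _ => (1:ℝ)) g)) := by
  by_cases hg : g ∈ F
  · simp only [Set.indicator_of_mem hg]
    exact tendsto_const_nhds.congr fun k => (lipAppr_eq_one F k hg).symm
  · rw [Set.indicator_of_notMem hg]
    have hd : 0 < infDist g F := (hF.notMem_iff_infDist_pos hFne).mp hg
    refine Tendsto.congr' ?_ tendsto_const_nhds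
    filter_upwards [eventually_ge_atTop ⌈1 / infDist g F⌉₊] with k hk
    have h1 : 1 / infDist g F ≤ (k:ℝ) := (Nat.ceil_le.mp hk)
    have h2 : (1:ℝ) ≤ (k:ℝ) * infDist g F := by
      rw [div_le_iff₀ hd] at h1; linarith
    have h3 : (k:ℝ) * infDist g F ≤ ((k:ℝ)+1) * infDist g F := by nlinarith
    show (0:ℝ) = max 0 (1 - ((k:ℝ) + 1) * infDist g F)
    rw [max_eq_left (by linarith)]

end LipAppr

/-! ### The main analytic lemmas -/

section Main

variable {Ω : Type*} [MeasurableSpace Ω] (μ : Measure Ω) [IsProbabilityMeasure μ]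
variable {X : ℕ → Ω → CooInfty} {Y : Ω → CooInfty}

/-- convergence of integrals of Lipschitz bounded functions under the two conditions -/
lemma tendsto_integral_lipschitz (hX : ∀ n, Measurable (X n)) (hY : Measurable Y)
    (hR : ∀ f : BoundedContinuousFunction C(ℝ≥0, ℝ) ℝ,
      Tendsto (fun n => ∫ ω, f (restrictFin (X n ω)) ∂μ) atTop
        (𝓝 (∫ ω, f (restrictFin (Y ω)) ∂μ)))
    (hT : ∀ ε : ℝ, 0 < ε →
      Tendsto (fun u : ℝ≥0 => ⨆ n : ℕ, μ (X n ⁻¹' badSet u ε)) atTop (𝓝 0))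
    (f : CooInfty →ᵇ ℝ) {K : ℝ≥0} (hf : LipschitzWith K f) :
    Tendsto (fun n => ∫ ω, f (X n ω) ∂μ) atTop (𝓝 (∫ ω, f (Y ω) ∂μ)) := by
  rw [Metric.tendsto_atTop]
  intro δ hδ
  set ε : ℝ := δ / (16 * (K + 1)) with hεdef
  have hε : 0 < ε := by positivity
  set δ' : ℝ := δ / (16 * (‖f‖ + 1)) with hδ'def
  have hnf : (0:ℝ) ≤ ‖f‖ := norm_nonneg f
  have hδ' : 0 < δ' := by positivity
  have hεeq : 16 * ((K:ℝ) + 1) * ε = δ := by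
    rw [hεdef]; field_simp
  have hδ'eq : 16 * (‖f‖ + 1) * δ' = δ := by
    rw [hδ'def]; field_simp
  have h1 : ∀ᶠ u : ℝ≥0 in atTop,
      (⨆ n : ℕ, μ (X n ⁻¹' badSet u ε)) < ENNReal.ofReal δ' :=
    (hT ε hε).eventually_lt_const (by simp [ENNReal.ofReal_pos, hδ'])
  obtain ⟨u₁, hu₁⟩ := eventually_atTop.mp h1
  obtain ⟨m, hm⟩ := ((tendsto_measure_badSet μ hY hε).eventually_lt_const
    (show (0:ℝ≥0∞) < ENNReal.ofReal δ' by simp [ENNReal.ofReal_pos, hδ'])).exists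
  set u : ℝ≥0 := max u₁ (m : ℝ≥0) with hu_def
  have hXb : ∀ n, (μ (X n ⁻¹' badSet u ε)).toReal ≤ δ' := fun n =>
    ENNReal.toReal_le_of_le_ofReal hδ'.le
      (le_trans (le_iSup (fun n => μ (X n ⁻¹' badSet u ε)) n) (hu₁ u (le_max_left _ _)).le)
  have hYb : (μ (Y ⁻¹' badSet u ε)).toReal ≤ δ' :=
    ENNReal.toReal_le_of_le_ofReal hδ'.le
      ((measure_mono (Set.preimage_mono (badSet_anti (le_max_right _ _) ε))).trans hm.le)
  set G : BoundedContinuousFunction C(ℝ≥0, ℝ) ℝ := f.compContinuous (trunc u) with hGdef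
  obtain ⟨N, hN⟩ := Metric.tendsto_atTop.mp (hR G) (δ/4) (by positivity)
  refine ⟨N, fun n hn => ?_⟩
  have e1 := key_integral_bound μ f hf (hX n) u hε
  have e2 := key_integral_bound μ f hf hY u hε
  have e3 : |(∫ ω, f (trunc u (restrictFin (X n ω))) ∂μ)
      - ∫ ω, f (trunc u (restrictFin (Y ω))) ∂μ| < δ/4 := by
    have := hN n hn
    rwa [Real.dist_eq] at this
  rw [Real.dist_eq]
  have hKc : (0:ℝ) ≤ (K:ℝ) := K.coe_nonneg
  have t1 : |(∫ ω, f (X n ω) ∂μ) - ∫ ω, f (trunc u (restrictFin (X n ω))) ∂μ| ≤ δ/4 := by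
    refine e1.trans ?_
    have := hXb n
    have q0 : (0:ℝ) ≤ (μ (X n ⁻¹' badSet u ε)).toReal := ENNReal.toReal_nonneg
    nlinarith
  have t2 : |(∫ ω, f (trunc u (restrictFin (Y ω))) ∂μ) - ∫ ω, f (Y ω) ∂μ| ≤ δ/4 := by
    rw [abs_sub_comm]
    refine e2.trans ?_
    have q0 : (0:ℝ) ≤ (μ (Y ⁻¹' badSet u ε)).toReal := ENNReal.toReal_nonneg
    nlinarith
  have tri := abs_sub_le (∫ ω, f (X n ω) ∂μ) (∫ ω, f (trunc u (restrictFin (X n ω))) ∂μ)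
    (∫ ω, f (Y ω) ∂μ)
  have tri2 := abs_sub_le (∫ ω, f (trunc u (restrictFin (X n ω))) ∂μ)
    (∫ ω, f (trunc u (restrictFin (Y ω))) ∂μ) (∫ ω, f (Y ω) ∂μ)
  linarith

/-- portmanteau: closed-set limsup inequality, from convergence against Lipschitz functions -/
lemma limsup_closed_le (hX : ∀ n, Measurable (X n)) (hY : Measurable Y)
    (hLip : ∀ (f : CooInfty →ᵇ ℝ) (K : ℝ≥0), LipschitzWith K f →
      Tendsto (fun n => ∫ ω, f (X n ω) ∂μ) atTop (𝓝 (∫ ω, f (Y ω) ∂μ)))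
    {F : Set CooInfty} (hF : IsClosed F) :
    atTop.limsup (fun n => μ (X n ⁻¹' F)) ≤ μ (Y ⁻¹' F) := by
  rcases F.eq_empty_or_nonempty with rfl | hFne
  · simp
  have hFm : MeasurableSet F := hF.measurableSet
  have claim1 : ∀ (k n : ℕ),
      μ (X n ⁻¹' F) ≤ ENNReal.ofReal (∫ ω, lipAppr F k (X n ω) ∂μ) := by
    intro k n
    have hint : Integrable (fun ω => lipAppr F k (X n ω)) μ := integrable_comp μ _ (hX n)
    have hind : Integrable ((X n ⁻¹' F).indicator (fun _ => (1:ℝ))) μ :=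
      (integrable_const _).indicator (hX n hFm)
    have hmono : ∀ ω, (X n ⁻¹' F).indicator (fun _ => (1:ℝ)) ω ≤ lipAppr F k (X n ω) := by
      intro ω
      by_cases hω : ω ∈ X n ⁻¹' F
      · rw [Set.indicator_of_mem hω, lipAppr_eq_one F k hω]
      · rw [Set.indicator_of_notMem hω]; exact lipAppr_nonneg _ _ _
    have h2 : (μ (X n ⁻¹' F)).toReal ≤ ∫ ω, lipAppr F k (X n ω) ∂μ := by
      have := integral_mono hind hint hmono
      rwa [integral_indicator_const _ (hX n hFm), smul_eq_mul, mul_one] at this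
    calc μ (X n ⁻¹' F) = ENNReal.ofReal (μ (X n ⁻¹' F)).toReal :=
          (ENNReal.ofReal_toReal (measure_ne_top μ _)).symm
      _ ≤ _ := ENNReal.ofReal_le_ofReal h2
  have claim2 : Tendsto (fun k => ∫ ω, lipAppr F k (Y ω) ∂μ) atTop
      (𝓝 (μ (Y ⁻¹' F)).toReal) := by
    have hlim : ∀ ω, Tendsto (fun k => lipAppr F k (Y ω)) atTop
        (𝓝 ((Y ⁻¹' F).indicator (fun _ => (1:ℝ)) ω)) := by
      intro ω
      have h := lipAppr_tendsto F hF hFne (Y ω)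
      by_cases hω : Y ω ∈ F
      · simpa [Set.indicator, hω] using h
      · simpa [Set.indicator, hω] using h
    have h := tendsto_integral_of_dominated_convergence (μ := μ)
      (F := fun k ω => lipAppr F k (Y ω)) (f := (Y ⁻¹' F).indicator (fun _ => (1:ℝ)))
      (bound := fun _ => (1:ℝ))
      (fun k => ((lipAppr F k).continuous.measurable.comp hY).aestronglyMeasurable)
      (integrable_const 1)
      (fun k => Eventually.of_forall fun ω => by
        rw [Real.norm_eq_abs, abs_of_nonneg (lipAppr_nonneg _ _ _)]
        exact lipAppr_le_one _ _ _)
      (Eventually.of_forall hlim)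
    rwa [integral_indicator_const _ (hY hFm), smul_eq_mul, mul_one] at h
  have claim3 : ∀ k : ℕ, atTop.limsup (fun n => μ (X n ⁻¹' F)) ≤
      ENNReal.ofReal (∫ ω, lipAppr F k (Y ω) ∂μ) := by
    intro k
    have ht : Tendsto (fun n => ENNReal.ofReal (∫ ω, lipAppr F k (X n ω) ∂μ)) atTop
        (𝓝 (ENNReal.ofReal (∫ ω, lipAppr F k (Y ω) ∂μ))) :=
      (ENNReal.continuous_ofReal.tendsto _).comp
        (hLip (lipAppr F k) _ (lipAppr_lipschitz F k))
    calc atTop.limsup (fun n => μ (X n ⁻¹' F))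
        ≤ atTop.limsup (fun n => ENNReal.ofReal (∫ ω, lipAppr F k (X n ω) ∂μ)) :=
          limsup_le_limsup (Eventually.of_forall (claim1 k))
      _ = _ := ht.limsup_eq
  have hfin : Tendsto (fun k => ENNReal.ofReal (∫ ω, lipAppr F k (Y ω) ∂μ)) atTop
      (𝓝 (μ (Y ⁻¹' F))) := by
    have := (ENNReal.continuous_ofReal.tendsto _).comp claim2
    rwa [ENNReal.ofReal_toReal (measure_ne_top μ _)] at this
  exact ge_of_tendsto' hfin claim3

end Main

theorem stmt_0 {Ω : Type*} [MeasurableSpace Ω] (μ : Measure Ω) [IsProbabilityMeasure μ]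
    (X : ℕ → Ω → CooInfty) (Y : Ω → CooInfty)
    (hX : ∀ n, Measurable (X n)) (hY : Measurable Y) :
    ConvInDist μ X Y ↔
      (ConvInDist μ (fun n ω => restrictFin (X n ω)) (fun ω => restrictFin (Y ω)) ∧
        ∀ ε : ℝ, 0 < ε →
          Tendsto
            (fun u : ℝ≥0 => ⨆ n : ℕ,
              μ {ω | ∃ t : ℝ≥0, u < t ∧
                ε < |X n ω (t : OnePoint ℝ≥0) - X n ω (OnePoint.infty)|})
            atTop (𝓝 0)) := by
  haveI hPM : ∀ n, IsProbabilityMeasure (μ.map (X n)) := fun n =>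
    Measure.isProbabilityMeasure_map (hX n).aemeasurable
  haveI hPMY : IsProbabilityMeasure (μ.map Y) := Measure.isProbabilityMeasure_map hY.aemeasurable
  set Pn : ℕ → ProbabilityMeasure CooInfty := fun n => ⟨μ.map (X n), hPM n⟩ with hPn
  set PY : ProbabilityMeasure CooInfty := ⟨μ.map Y, hPMY⟩ with hPY
  have hi : ∀ (f : CooInfty →ᵇ ℝ) n, ∫ x, f x ∂(Pn n : Measure CooInfty) = ∫ ω, f (X n ω) ∂μ :=
    fun f n => integral_map (hX n).aemeasurable f.continuous.aestronglyMeasurable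
  have hiY : ∀ (f : CooInfty →ᵇ ℝ), ∫ x, f x ∂(PY : Measure CooInfty) = ∫ ω, f (Y ω) ∂μ :=
    fun f => integral_map hY.aemeasurable f.continuous.aestronglyMeasurable
  constructor
  · intro h
    have htend : Tendsto Pn atTop (𝓝 PY) := by
      rw [ProbabilityMeasure.tendsto_iff_forall_integral_tendsto]
      intro f
      simp_rw [hi f, hiY f]
      exact h f
    constructor
    · intro f
      exact h (f.compContinuous restrictFinCM)
    · intro ε hε
      rw [ENNReal.tendsto_nhds_zero]
      intro δ hδ
      obtain ⟨m, hm⟩ := ((tendsto_measure_badSet μ hY (half_pos hε)).eventually_lt_const hδ).exists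
      set Fc := closure (badSet (m : ℝ≥0) ε) with hFc_def
      have hFc : IsClosed Fc := isClosed_closure
      have hlimsup := ProbabilityMeasure.limsup_measure_closed_le_of_tendsto htend hFc
      have hYF : (PY : Measure CooInfty) Fc ≤ μ (Y ⁻¹' badSet (m : ℝ≥0) (ε/2)) := by
        show (μ.map Y) Fc ≤ _
        rw [Measure.map_apply hY hFc.measurableSet]
        exact measure_mono (Set.preimage_mono (closure_badSet_subset hε))
      have hlt : atTop.limsup (fun n => (Pn n : Measure CooInfty) Fc) < δ :=
        lt_of_le_of_lt (hlimsup.trans hYF) hm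
      obtain ⟨N, hN⟩ := eventually_atTop.mp (eventually_lt_of_limsup_lt hlt)
      have hsel : ∀ n : ℕ, ∃ k : ℕ, μ (X n ⁻¹' badSet (k : ℝ≥0) ε) < δ := fun n =>
        ((tendsto_measure_badSet μ (hX n) hε).eventually_lt_const hδ).exists
      choose sel hsel' using hsel
      set M : ℕ := max m ((Finset.range N).sup sel) with hM
      filter_upwards [eventually_ge_atTop ((M : ℝ≥0))] with u hu
      refine iSup_le fun n => ?_
      show μ (X n ⁻¹' badSet u ε) ≤ δ
      rcases lt_or_ge n N with hnN | hnN
      · have hle : ((sel n : ℕ) : ℝ≥0) ≤ u := by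
          refine le_trans ?_ hu
          exact_mod_cast Nat.cast_le.mpr
            (le_trans (Finset.le_sup (Finset.mem_range.mpr hnN)) (le_max_right m _))
        exact le_of_lt (lt_of_le_of_lt
          (measure_mono (Set.preimage_mono (badSet_anti hle ε))) (hsel' n))
      · have hle : ((m : ℕ) : ℝ≥0) ≤ u := by
          refine le_trans ?_ hu
          exact_mod_cast Nat.cast_le.mpr (le_max_left m ((Finset.range N).sup sel))
        have hsub : μ (X n ⁻¹' badSet u ε) ≤ (Pn n : Measure CooInfty) Fc := by
          show _ ≤ (μ.map (X n)) Fc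
          rw [Measure.map_apply (hX n) hFc.measurableSet]
          exact measure_mono (Set.preimage_mono ((badSet_anti hle ε).trans subset_closure))
        exact hsub.trans (hN n hnN).le
  · rintro ⟨hR, hT⟩
    have hT' : ∀ ε : ℝ, 0 < ε →
        Tendsto (fun u : ℝ≥0 => ⨆ n : ℕ, μ (X n ⁻¹' badSet u ε)) atTop (𝓝 0) :=
      fun ε hε => hT ε hε
    have hLip : ∀ (f : CooInfty →ᵇ ℝ) (K : ℝ≥0), LipschitzWith K f →
        Tendsto (fun n => ∫ ω, f (X n ω) ∂μ) atTop (𝓝 (∫ ω, f (Y ω) ∂μ)) :=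
      fun f K hf => tendsto_integral_lipschitz μ hX hY (fun f' => hR f') hT' f hf
    have h_closed : ∀ F : Set CooInfty, IsClosed F →
        atTop.limsup (fun n => μ.map (X n) F) ≤ μ.map Y F := by
      intro F hF
      have h := limsup_closed_le μ hX hY hLip hF
      rw [Measure.map_apply hY hF.measurableSet]
      refine le_trans (le_of_eq ?_) h
      congr 1
      funext n
      rw [Measure.map_apply (hX n) hF.measurableSet]
    have h_open_e : ∀ G : Set CooInfty, IsOpen G →
        (μ.map Y) G ≤ atTop.liminf (fun n => μ.map (X n) G) := by
      intro G hG
      exact le_measure_liminf_of_limsup_measure_compl_le hG.measurableSet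
        (h_closed Gᶜ (isClosed_compl_iff.mpr hG))
    have h_opens : ∀ G, IsOpen G → PY G ≤ atTop.liminf (fun n => Pn n G) := by
      intro G hG
      have aux : (ENNReal.ofNNReal (liminf (fun n => Pn n G) atTop)) =
          liminf (ENNReal.ofNNReal ∘ fun n => Pn n G) atTop := by
        refine Monotone.map_liminf_of_continuousAt (F := atTop) ENNReal.coe_mono
          (fun n => Pn n G) ?_ ?_ ?_
        · exact ENNReal.continuous_coe.continuousAt
        · exact IsBoundedUnder.isCoboundedUnder_ge ⟨1, by simp⟩
        · exact ⟨0, by simp⟩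
      rw [← ENNReal.coe_le_coe, aux]
      have h := h_open_e G hG
      calc (ENNReal.ofNNReal (PY G)) = (μ.map Y) G := by
            rw [ProbabilityMeasure.ennreal_coeFn_eq_coeFn_toMeasure]; rfl
        _ ≤ atTop.liminf (fun n => μ.map (X n) G) := h
        _ = liminf (ENNReal.ofNNReal ∘ fun n => Pn n G) atTop := by
            congr 1
            funext n
            rw [Function.comp_apply, ProbabilityMeasure.ennreal_coeFn_eq_coeFn_toMeasure]
            rfl
    have htend : Tendsto Pn atTop (𝓝 PY) :=
      MeasureTheory.tendsto_of_forall_isOpen_le_liminf h_opens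
    intro f
    have h := ProbabilityMeasure.tendsto_iff_forall_integral_tendsto.mp htend f
    rw [hiY f] at h
    refine h.congr fun n => ?_
    exact hi f n
end
end

section
/- Let f : ℝ → ℝ be a function that is initially defined on the integers, with Σ_{k∈ℤ} |f(k)| < ∞, and extended to ℝ by linear interpolation (f is affine on each interval [k, k+1]). Define f̂(ξ) := Σ_{k∈ℤ} f(k) e^{iξk}. Then for every 0 < α < 1 there is a constant C_α < ∞, depending only on α, such that the Hölder seminorm of f on ℝ satisfies ||f||_{H^α(ℝ)} ≤ C_α ( ∫_{−π}^{π} |ξ|^{2α+1} |f̂(ξ)|² dξ )^{1/2}. -/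
/-- The Fourier transform `f̂(ξ) = Σ_{k ∈ ℤ} f(k) e^{iξk}` of the restriction of `f` to the
integers. -/
noncomputable def intFT (f : ℝ → ℝ) (ξ : ℝ) : ℂ :=
  ∑' k : ℤ, (f k : ℂ) * Complex.exp (Complex.I * (ξ : ℂ) * (k : ℂ))

open MeasureTheory Real Complex intervalIntegral Set

lemma abs_exp_term (x : ℝ) (k : ℤ) : ‖Complex.exp (Complex.I * (x:ℂ) * (k:ℂ))‖ = 1 := by
  have : Complex.I * (x:ℂ) * (k:ℂ) = ((x * k : ℝ) : ℂ) * Complex.I := by push_cast; ring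
  rw [this, Complex.norm_exp_ofReal_mul_I]

lemma norm_exp_term (x : ℝ) (k : ℤ) : ‖Complex.exp (Complex.I * (x:ℂ) * (k:ℂ))‖ = 1 :=
  abs_exp_term x k

lemma intFT_continuous {f : ℝ → ℝ} (hf : Summable fun k : ℤ => |f k|) :
    Continuous (intFT f) := by
  apply continuous_tsum (u := fun k : ℤ => |f k|) ?_ hf ?_
  · exact fun k => continuous_const.mul (Complex.continuous_exp.comp (by fun_prop))
  · intro k x
    rw [norm_mul, norm_exp_term, mul_one, Complex.norm_real, Real.norm_eq_abs]

lemma intFT_norm_le {f : ℝ → ℝ} (hf : Summable fun k : ℤ => |f k|) (ξ : ℝ) :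
    ‖intFT f ξ‖ ≤ ∑' k : ℤ, |f k| := by
  have hnorm : ∀ k : ℤ, ‖(f k : ℂ) * Complex.exp (Complex.I * (ξ:ℂ) * (k:ℂ))‖ = |f k| := by
    intro k; rw [norm_mul, norm_exp_term, mul_one, Complex.norm_real, Real.norm_eq_abs]
  refine (norm_tsum_le_tsum_norm ?_).trans_eq ?_
  · simpa only [hnorm] using hf
  · exact tsum_congr fun k => hnorm k

lemma exp_integral (n : ℤ) :
    ∫ ξ in Set.Ioc (-Real.pi) Real.pi, Complex.exp (Complex.I * (ξ:ℂ) * (n:ℂ)) =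
      if n = 0 then (2 * Real.pi : ℂ) else 0 := by
  have hle : -Real.pi ≤ Real.pi := by linarith [Real.pi_pos]
  rw [← intervalIntegral.integral_of_le hle]
  rcases eq_or_ne n 0 with h | h
  · subst h; simp; push_cast; ring
  · simp only [if_neg h]
    have hc : (Complex.I * (n:ℂ)) ≠ 0 := by
      simp only [ne_eq, mul_eq_zero, Complex.I_ne_zero, false_or, Int.cast_eq_zero]
      exact h
    have hco : ∀ ξ : ℝ, Complex.I * (ξ:ℂ) * (n:ℂ) = (Complex.I * (n:ℂ)) * (ξ:ℂ) := by
      intro ξ; ring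
    simp only [hco]
    rw [integral_exp_mul_complex hc]
    have h1 : Complex.exp (Complex.I * (n:ℂ) * (Real.pi:ℂ)) =
        Complex.exp (Complex.I * (n:ℂ) * ((-Real.pi : ℝ):ℂ)) := by
      calc Complex.exp (Complex.I * (n:ℂ) * (Real.pi:ℂ))
          = Complex.exp (Complex.I * (n:ℂ) * ((-Real.pi:ℝ):ℂ) + (n:ℂ) * (2 * (Real.pi:ℂ) * Complex.I)) := by
            congr 1; push_cast; ring
        _ = _ := by rw [Complex.exp_add, Complex.exp_int_mul_two_pi_mul_I, mul_one]
    rw [h1, sub_self, zero_div]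

lemma inversion {f : ℝ → ℝ} (hf : Summable fun k : ℤ => |f k|) (k : ℤ) :
    ∫ ξ in Set.Ioc (-Real.pi) Real.pi, intFT f ξ * Complex.exp (-(Complex.I * (ξ:ℂ) * (k:ℂ)))
      = (f k : ℂ) * (2 * Real.pi) := by
  have hpt : ∀ ξ : ℝ, intFT f ξ * Complex.exp (-(Complex.I * (ξ:ℂ) * (k:ℂ)))
      = ∑' j : ℤ, (f j : ℂ) * Complex.exp (Complex.I * (ξ:ℂ) * ((j - k : ℤ):ℂ)) := by
    intro ξ
    rw [intFT, ← tsum_mul_right]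
    refine tsum_congr fun j => ?_
    rw [mul_assoc, ← Complex.exp_add]
    congr 2
    push_cast; ring
  simp only [hpt]
  rw [MeasureTheory.integral_tsum]
  · have hterm : ∀ j : ℤ,
        (∫ ξ in Set.Ioc (-Real.pi) Real.pi,
          (f j : ℂ) * Complex.exp (Complex.I * (ξ:ℂ) * ((j - k : ℤ):ℂ)))
        = if j = k then (f k : ℂ) * (2 * Real.pi) else 0 := by
      intro j
      rw [MeasureTheory.integral_const_mul, exp_integral (j - k)]
      rcases eq_or_ne j k with h | h
      · subst h; simp
      · rw [if_neg (sub_ne_zero.mpr h), if_neg h, mul_zero]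
    simp only [hterm]
    exact tsum_ite_eq k _
  · intro j
    exact (continuous_const.mul (Complex.continuous_exp.comp (by fun_prop))).aestronglyMeasurable
  · have hnn : ∀ j : ℤ, ∀ ξ : ℝ,
        (‖(f j : ℂ) * Complex.exp (Complex.I * (ξ:ℂ) * ((j - k : ℤ):ℂ))‖₊ : ENNReal)
          = (‖f j‖₊ : ENNReal) := by
      intro j ξ
      norm_cast
      rw [nnnorm_mul]
      have h1 : ‖Complex.exp (Complex.I * (ξ:ℂ) * ((j - k : ℤ):ℂ))‖₊ = 1 := by
        ext; simpa using norm_exp_term ξ (j - k)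
      rw [h1, mul_one]
      ext; simp [Complex.norm_real]
    simp only [enorm_eq_nnnorm, hnn]
    rw [← lt_top_iff_ne_top]
    calc ∑' j : ℤ, ∫⁻ _ in Set.Ioc (-Real.pi) Real.pi, (‖f j‖₊ : ENNReal)
        = ∑' j : ℤ, (‖f j‖₊ : ENNReal) * volume (Set.Ioc (-Real.pi) Real.pi) := by
          simp [MeasureTheory.lintegral_const]
      _ < ⊤ := by
          rw [ENNReal.tsum_mul_right]
          apply ENNReal.mul_lt_top
          · rw [lt_top_iff_ne_top, ENNReal.tsum_coe_ne_top_iff_summable]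
            have : Summable fun j : ℤ => ‖f j‖₊ := by
              rw [← NNReal.summable_coe]
              simpa using hf
            exact this
          · simp [Real.volume_Ioc]


lemma norm_exp_I_sub_one_le (θ : ℝ) : ‖Complex.exp ((θ:ℂ) * Complex.I) - 1‖ ≤ |θ| := by
  set x : ℂ := ((θ/2 : ℝ) : ℂ) with hx
  have key : Complex.exp ((θ:ℂ) * Complex.I) - 1
      = Complex.exp (x * Complex.I) * (2 * Complex.sin x) * Complex.I := by
    rw [Complex.two_sin]
    have e1 : Complex.exp (x * Complex.I) * Complex.exp (x * Complex.I)
        = Complex.exp ((θ:ℂ) * Complex.I) := by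
      rw [← Complex.exp_add]; congr 1; rw [hx]; push_cast; ring
    have e2 : Complex.exp (x * Complex.I) * Complex.exp (-x * Complex.I) = 1 := by
      rw [← Complex.exp_add, show x * Complex.I + -x * Complex.I = 0 by ring, Complex.exp_zero]
    calc Complex.exp ((θ:ℂ) * Complex.I) - 1
        = Complex.exp (x*Complex.I) * Complex.exp (x*Complex.I)
          - Complex.exp (x*Complex.I) * Complex.exp (-x*Complex.I) := by rw [e1, e2]
      _ = Complex.exp (x*Complex.I) * ((Complex.exp (-x*Complex.I)
            - Complex.exp (x*Complex.I)) * Complex.I) * Complex.I := by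
          rw [mul_assoc, mul_assoc, Complex.I_mul_I]; ring
  rw [key, norm_mul, norm_mul, Complex.norm_I, mul_one, hx, Complex.norm_exp_ofReal_mul_I, one_mul,
    ← Complex.ofReal_sin]
  rw [norm_mul]
  simp only [Complex.norm_ofNat, Complex.norm_real, Real.norm_eq_abs]
  calc (2:ℝ) * |Real.sin (θ/2)| ≤ 2 * |θ/2| := by
        have := Real.abs_sin_le_abs (x := θ/2); linarith [this]
    _ = |θ| := by rw [abs_div]; simp; ring


lemma M2_bound {α : ℝ} (hα0 : 0 < α) (hα1 : α < 1) {n : ℤ} (hn : n ≠ 0) :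
    IntervalIntegrable (fun ξ : ℝ => min 4 ((n:ℝ)^2 * ξ^2) * |ξ| ^ (-(2*α+1)))
      volume (-Real.pi) Real.pi ∧
    (∫ ξ in (-Real.pi)..Real.pi, min 4 ((n:ℝ)^2 * ξ^2) * |ξ| ^ (-(2*α+1)))
      ≤ (1/(1-α) + 4/α) * |(n:ℝ)| ^ (2*α) := by
  set M2 : ℝ → ℝ := fun ξ => min 4 ((n:ℝ)^2 * ξ^2) * |ξ| ^ (-(2*α+1)) with hM2
  have hnabs : (1:ℝ) ≤ |(n:ℝ)| := by
    rw [← Int.cast_abs]; exact_mod_cast Int.one_le_abs hn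
  have hnpos : (0:ℝ) < |(n:ℝ)| := lt_of_lt_of_le one_pos hnabs
  set c : ℝ := |(n:ℝ)|⁻¹ with hc
  have hcpos : 0 < c := inv_pos.mpr hnpos
  have hc1 : c ≤ 1 := inv_le_one_of_one_le₀ hnabs
  have hcpi : c ≤ Real.pi := hc1.trans (by linarith [Real.pi_gt_three])
  have hmeas : Measurable M2 :=
    ((measurable_const.min (by fun_prop)).mul ((measurable_id.abs).pow_const _))
  have hM2nonneg : ∀ x : ℝ, 0 ≤ M2 x := fun x =>
    mul_nonneg (le_min (by norm_num) (by positivity)) (Real.rpow_nonneg (abs_nonneg x) _)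
  have hbd1 : ∀ x ∈ Set.Icc (0:ℝ) c, M2 x ≤ (n:ℝ)^2 * x ^ (1-2*α) := by
    intro x hx
    rcases eq_or_lt_of_le hx.1 with h0 | h0
    · rw [hM2]; simp only [← h0]
      rw [abs_zero, Real.zero_rpow (by linarith), mul_zero]
      positivity
    · have hxabs : |x| = x := abs_of_pos h0
      calc M2 x ≤ ((n:ℝ)^2 * x^2) * |x| ^ (-(2*α+1)) :=
            mul_le_mul_of_nonneg_right (min_le_right _ _) (Real.rpow_nonneg (abs_nonneg x) _)
        _ = (n:ℝ)^2 * x ^ (1-2*α) := by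
            rw [hxabs, mul_assoc]
            congr 1
            rw [← Real.rpow_two, ← Real.rpow_add h0]
            congr 1; ring
  have hbd2 : ∀ x ∈ Set.Icc c Real.pi, M2 x ≤ 4 * x ^ (-2*α-1) := by
    intro x hx
    have hxpos : 0 < x := lt_of_lt_of_le hcpos hx.1
    calc M2 x ≤ 4 * |x| ^ (-(2*α+1)) :=
          mul_le_mul_of_nonneg_right (min_le_left _ _) (Real.rpow_nonneg (abs_nonneg x) _)
      _ = 4 * x ^ (-2*α-1) := by rw [abs_of_pos hxpos]; congr 1; ring
  have hmaj1 : IntervalIntegrable (fun x : ℝ => (n:ℝ)^2 * x ^ (1-2*α)) volume 0 c :=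
    (intervalIntegrable_rpow' (by linarith)).const_mul _
  have hmaj2 : IntervalIntegrable (fun x : ℝ => 4 * x ^ (-2*α-1)) volume c Real.pi :=
    (intervalIntegrable_rpow (Or.inr (Set.notMem_uIcc_of_lt hcpos Real.pi_pos))).const_mul _
  have hI1 : IntervalIntegrable M2 volume 0 c := by
    apply hmaj1.mono_fun hmeas.aestronglyMeasurable
    rw [Filter.EventuallyLE, ae_restrict_iff' measurableSet_uIoc]
    apply Filter.Eventually.of_forall
    intro x hx
    rw [Set.uIoc_of_le hcpos.le] at hx
    have h1 := hbd1 x ⟨hx.1.le, hx.2⟩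
    rw [Real.norm_eq_abs, _root_.abs_of_nonneg (hM2nonneg x), Real.norm_eq_abs]
    exact h1.trans (le_abs_self _)
  have hI2 : IntervalIntegrable M2 volume c Real.pi := by
    apply ContinuousOn.intervalIntegrable
    apply ContinuousOn.mul
    · exact (continuous_const.min (by fun_prop)).continuousOn
    · apply ContinuousOn.rpow_const (Continuous.continuousOn (_root_.continuous_abs))
      intro x hx
      rw [Set.uIcc_of_le hcpi] at hx
      exact Or.inl (abs_ne_zero.mpr (lt_of_lt_of_le hcpos hx.1).ne')
  have hIpos : IntervalIntegrable M2 volume 0 Real.pi := hI1.trans hI2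
  have hM2even : ∀ x : ℝ, M2 (-x) = M2 x := by
    intro x; rw [hM2]; simp
  have hIneg : IntervalIntegrable M2 volume (-Real.pi) 0 := by
    have := ((IntervalIntegrable.iff_comp_neg (f := M2) (a := 0) (b := Real.pi)).mp hIpos).symm
    simpa [hM2even] using this
  constructor
  · exact hIneg.trans hIpos
  -- value bounds
  have hval1 : (∫ x in (0:ℝ)..c, (n:ℝ)^2 * x ^ (1-2*α)) = |(n:ℝ)| ^ (2*α) / (2-2*α) := by
    rw [intervalIntegral.integral_const_mul, integral_rpow (Or.inl (by linarith))]
    rw [Real.zero_rpow (by linarith), sub_zero, hc]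
    rw [show (1:ℝ) - 2*α + 1 = 2 - 2*α by ring]
    rw [show ((n:ℝ))^2 = |(n:ℝ)| ^ (2:ℝ) by rw [← _root_.sq_abs]; exact (Real.rpow_two _).symm]
    rw [show (|(n:ℝ)|⁻¹) ^ ((2:ℝ)-2*α) = |(n:ℝ)| ^ (2*α-2) by
      rw [← Real.rpow_neg_one, ← Real.rpow_mul hnpos.le]; congr 1; ring]
    rw [← mul_div_assoc, ← Real.rpow_add hnpos,
      show (2:ℝ) + (2*α-2) = 2*α by ring]
  have hval2 : (∫ x in c..Real.pi, 4 * x ^ (-2*α-1)) ≤ 2/α * |(n:ℝ)| ^ (2*α) := by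
    rw [intervalIntegral.integral_const_mul,
      integral_rpow (Or.inr ⟨by intro h; apply hα0.ne'; linarith,
        Set.notMem_uIcc_of_lt hcpos Real.pi_pos⟩)]
    have hcv : c ^ (-(2*α)) = |(n:ℝ)| ^ (2*α) := by
      rw [hc, ← Real.rpow_neg_one, ← Real.rpow_mul hnpos.le]
      norm_num
    have hπv : 0 ≤ Real.pi ^ (-(2*α)) := Real.rpow_nonneg Real.pi_pos.le _
    rw [show (-2*α-1+1 : ℝ) = -(2*α) by ring]
    calc 4 * ((Real.pi ^ (-(2*α)) - c ^ (-(2*α))) / (-(2*α)))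
        = 4 * ((c ^ (-(2*α)) - Real.pi ^ (-(2*α))) / (2*α)) := by
          rw [div_neg, ← neg_div, neg_sub]
      _ ≤ 4 * (c ^ (-(2*α)) / (2*α)) := by
          have h2 : (0:ℝ) < 2*α := by linarith
          gcongr
          linarith
      _ = 2/α * |(n:ℝ)| ^ (2*α) := by
          rw [hcv]; field_simp; ring
  have e1 : (∫ x in (-Real.pi)..Real.pi, M2 x)
      = (∫ x in (-Real.pi)..(0:ℝ), M2 x) + ∫ x in (0:ℝ)..Real.pi, M2 x :=
    (integral_add_adjacent_intervals hIneg hIpos).symm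
  have e2 : (∫ x in (-Real.pi)..(0:ℝ), M2 x) = ∫ x in (0:ℝ)..Real.pi, M2 x := by
    have h := intervalIntegral.integral_comp_neg (a := (0:ℝ)) (b := Real.pi) M2
    simp only [hM2even, neg_zero] at h
    exact h.symm
  have e3 : (∫ x in (0:ℝ)..Real.pi, M2 x)
      = (∫ x in (0:ℝ)..c, M2 x) + ∫ x in c..Real.pi, M2 x :=
    (integral_add_adjacent_intervals hI1 hI2).symm
  have b1 : (∫ x in (0:ℝ)..c, M2 x) ≤ |(n:ℝ)| ^ (2*α) / (2-2*α) :=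
    (intervalIntegral.integral_mono_on hcpos.le hI1 hmaj1 hbd1).trans_eq hval1
  have b2 : (∫ x in c..Real.pi, M2 x) ≤ 2/α * |(n:ℝ)| ^ (2*α) :=
    (intervalIntegral.integral_mono_on hcpi hI2 hmaj2 hbd2).trans hval2
  have hhalf : (2:ℝ)/(2-2*α) = 1/(1-α) := by
    rw [div_eq_div_iff (by linarith) (by linarith)]; ring
  have key : 2*(|(n:ℝ)| ^ (2*α)/(2-2*α) + 2/α*|(n:ℝ)| ^ (2*α))
      = (1/(1-α)+4/α)*|(n:ℝ)| ^ (2*α) := by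
    calc 2*(|(n:ℝ)| ^ (2*α)/(2-2*α) + 2/α*|(n:ℝ)| ^ (2*α))
        = (2/(2-2*α))*|(n:ℝ)| ^ (2*α) + (4/α)*|(n:ℝ)| ^ (2*α) := by ring
      _ = (1/(1-α))*|(n:ℝ)| ^ (2*α) + (4/α)*|(n:ℝ)| ^ (2*α) := by rw [hhalf]
      _ = (1/(1-α)+4/α)*|(n:ℝ)| ^ (2*α) := by ring
  rw [e1, e2, e3]
  linarith [b1, b2, key]

lemma int_holder {α : ℝ} (hα0 : 0 < α) (hα1 : α < 1) {f : ℝ → ℝ}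
    (hf : Summable fun k : ℤ => |f k|) (k m : ℤ) :
    |f k - f m| ≤ (2*Real.pi)⁻¹ * ((1/(1-α) + 4/α) ^ (1/2 : ℝ)) *
      ((∫ ξ in (-Real.pi)..Real.pi, |ξ| ^ (2*α+1) * ‖intFT f ξ‖ ^ 2) ^ (1/2 : ℝ)) *
      |(k:ℝ) - (m:ℝ)| ^ α := by
  have hπ := Real.pi_pos
  have hle : -Real.pi ≤ Real.pi := by linarith
  set μ : Measure ℝ := volume.restrict (Set.Ioc (-Real.pi) Real.pi) with hμ
  set S : ℝ := (∫ ξ in (-Real.pi)..Real.pi,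
      |ξ| ^ (2*α+1) * ‖intFT f ξ‖ ^ 2) ^ (1/2 : ℝ) with hS
  have h1α : (0:ℝ) < 1 - α := by linarith
  have hKpos : (0:ℝ) < 1/(1-α) + 4/α := by positivity
  -- the integral defining S is nonneg
  have hip : (0:ℝ) ≤ ∫ ξ in (-Real.pi)..Real.pi,
      |ξ| ^ (2*α+1) * ‖intFT f ξ‖ ^ 2 := by
    apply intervalIntegral.integral_nonneg hle
    intro x _
    positivity
  have hSnn : 0 ≤ S := Real.rpow_nonneg hip _
  rcases eq_or_ne k m with rfl | hkm
  · simp only [sub_self, abs_zero, Real.zero_rpow hα0.ne', mul_zero]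
    exact le_refl 0
  set n : ℤ := k - m with hn
  have hn0 : n ≠ 0 := sub_ne_zero.mpr hkm
  have hcont : Continuous (intFT f) := intFT_continuous hf
  -- integrability of the complex integrands
  have hint : ∀ j : ℤ, IntegrableOn
      (fun ξ : ℝ => intFT f ξ * Complex.exp (-(Complex.I * (ξ:ℂ) * (j:ℂ))))
      (Set.Ioc (-Real.pi) Real.pi) volume := by
    intro j
    apply Continuous.integrableOn_Ioc
    exact hcont.mul (Complex.continuous_exp.comp (by fun_prop))
  -- step 1
  have step1 : ((f k - f m : ℝ) : ℂ) * (2 * Real.pi)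
      = ∫ ξ in Set.Ioc (-Real.pi) Real.pi,
          intFT f ξ * (Complex.exp (-(Complex.I * (ξ:ℂ) * (k:ℂ)))
            - Complex.exp (-(Complex.I * (ξ:ℂ) * (m:ℂ)))) := by
    have h2 := MeasureTheory.integral_sub (hint k) (hint m)
    rw [inversion hf k, inversion hf m] at h2
    rw [show ((f k - f m : ℝ) : ℂ) * (2 * Real.pi)
        = (f k : ℂ) * (2 * Real.pi) - (f m : ℂ) * (2 * Real.pi) by push_cast; ring, ← h2]
    exact MeasureTheory.integral_congr_ae (Filter.Eventually.of_forall fun ξ => (mul_sub _ _ _).symm)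
  -- normalization exponent
  set q : ℝ := (2*α+1)/2 with hq
  have hq0 : 0 < q := by rw [hq]; linarith
  set g : ℝ → ℝ := fun ξ => |ξ| ^ q * ‖intFT f ξ‖ with hg
  set hk : ℝ → ℝ :=
    fun ξ => |ξ| ^ (-q) * ‖Complex.exp (-(Complex.I * (ξ:ℂ) * (n:ℂ))) - 1‖ with hhk
  have hexparg : ∀ (ξ : ℝ) (j : ℤ), -(Complex.I * (ξ:ℂ) * (j:ℂ)) = ((-(ξ*j) : ℝ) : ℂ) * Complex.I := by
    intro ξ j; push_cast; ring
  have hexpnorm : ∀ (ξ : ℝ) (j : ℤ), ‖Complex.exp (-(Complex.I * (ξ:ℂ) * (j:ℂ)))‖ = 1 := by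
    intro ξ j; rw [hexparg, Complex.norm_exp_ofReal_mul_I]
  have hfactor : ∀ ξ : ℝ,
      ‖Complex.exp (-(Complex.I * (ξ:ℂ) * (k:ℂ))) - Complex.exp (-(Complex.I * (ξ:ℂ) * (m:ℂ)))‖
        = ‖Complex.exp (-(Complex.I * (ξ:ℂ) * (n:ℂ))) - 1‖ := by
    intro ξ
    have e : Complex.exp (-(Complex.I * (ξ:ℂ) * (k:ℂ)))
        - Complex.exp (-(Complex.I * (ξ:ℂ) * (m:ℂ)))
        = Complex.exp (-(Complex.I * (ξ:ℂ) * (m:ℂ)))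
          * (Complex.exp (-(Complex.I * (ξ:ℂ) * (n:ℂ))) - 1) := by
      rw [mul_sub, mul_one, ← Complex.exp_add]
      congr 2
      rw [hn]; push_cast; ring
    rw [e, norm_mul, hexpnorm, one_mul]
  have hGgh : ∀ ξ : ℝ, ‖intFT f ξ‖ * ‖Complex.exp (-(Complex.I * (ξ:ℂ) * (n:ℂ))) - 1‖
      = g ξ * hk ξ := by
    intro ξ
    rcases eq_or_ne ξ 0 with rfl | hξ
    · simp [hg, hhk, Real.zero_rpow hq0.ne', Real.zero_rpow (neg_ne_zero.mpr hq0.ne')]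
    · have habs : (0:ℝ) < |ξ| := abs_pos.mpr hξ
      rw [hg, hhk]
      have : |ξ| ^ q * ‖intFT f ξ‖ * (|ξ| ^ (-q)
          * ‖Complex.exp (-(Complex.I * (ξ:ℂ) * (n:ℂ))) - 1‖)
          = (|ξ| ^ q * |ξ| ^ (-q)) * (‖intFT f ξ‖
          * ‖Complex.exp (-(Complex.I * (ξ:ℂ) * (n:ℂ))) - 1‖) := by ring
      rw [this, ← Real.rpow_add habs, add_neg_cancel, Real.rpow_zero, one_mul]
  -- step 2
  have step2 : |f k - f m| * (2*Real.pi) ≤ ∫ ξ, g ξ * hk ξ ∂μ := by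
    have e0 : |f k - f m| * (2*Real.pi) = ‖((f k - f m : ℝ) : ℂ) * ((2 * Real.pi : ℝ):ℂ)‖ := by
      rw [norm_mul, Complex.norm_real, Complex.norm_real, Real.norm_eq_abs, Real.norm_eq_abs,
        abs_of_pos (by linarith : (0:ℝ) < 2*Real.pi)]
    rw [e0]
    have e1 : ((f k - f m : ℝ) : ℂ) * ((2 * Real.pi : ℝ):ℂ)
        = ∫ ξ in Set.Ioc (-Real.pi) Real.pi,
          intFT f ξ * (Complex.exp (-(Complex.I * (ξ:ℂ) * (k:ℂ)))
            - Complex.exp (-(Complex.I * (ξ:ℂ) * (m:ℂ)))) := by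
      rw [← step1]; norm_cast
    rw [e1]
    refine (MeasureTheory.norm_integral_le_integral_norm _).trans ?_
    apply le_of_eq
    apply MeasureTheory.integral_congr_ae
    apply Filter.Eventually.of_forall
    intro ξ
    simp only [norm_mul]
    rw [hfactor ξ, hGgh ξ]
  -- L² facts
  have hpq : Real.HolderConjugate 2 2 := Real.HolderConjugate.two_two
  have hgcont : Continuous g :=
    (_root_.continuous_abs.rpow_const (fun x => Or.inr hq0.le)).mul hcont.norm
  have hgmem : MemLp g (ENNReal.ofReal 2) μ := by
    rw [show ((ENNReal.ofReal 2) : ENNReal) = 2 by simp]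
    refine (memLp_two_iff_integrable_sq hgcont.aestronglyMeasurable).mpr ?_
    exact (hgcont.pow 2).integrableOn_Ioc
  have hhkmeas : Measurable hk := by
    apply (measurable_id.abs.pow_const _).mul
    apply Continuous.measurable
    exact ((Complex.continuous_exp.comp (by fun_prop)).sub continuous_const).norm
  set M2 : ℝ → ℝ := fun ξ => min 4 ((n:ℝ)^2 * ξ^2) * |ξ| ^ (-(2*α+1)) with hM2def
  have hM2nonneg : ∀ x : ℝ, 0 ≤ M2 x := fun x =>
    mul_nonneg (le_min (by norm_num) (by positivity)) (Real.rpow_nonneg (abs_nonneg x) _)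
  have hM2int : Integrable M2 μ := by
    have h2 := (M2_bound hα0 hα1 hn0).1
    rw [intervalIntegrable_iff, Set.uIoc_of_le hle] at h2
    exact h2
  have hhksq_le : ∀ ξ : ℝ, hk ξ ^ 2 ≤ M2 ξ := by
    intro ξ
    rcases eq_or_ne ξ 0 with rfl | hξ
    · rw [hhk]
      simp only [abs_zero, Real.zero_rpow (neg_ne_zero.mpr hq0.ne'), zero_mul]
      rw [zero_pow (by norm_num)]
      exact hM2nonneg 0
    · have habs : (0:ℝ) < |ξ| := abs_pos.mpr hξ
      have hb2 : ‖Complex.exp (-(Complex.I * (ξ:ℂ) * (n:ℂ))) - 1‖ ≤ 2 := by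
        refine (norm_sub_le _ _).trans ?_
        rw [hexpnorm, norm_one]; norm_num
      have hb1 : ‖Complex.exp (-(Complex.I * (ξ:ℂ) * (n:ℂ))) - 1‖ ≤ |ξ| * |(n:ℝ)| := by
        have := norm_exp_I_sub_one_le (-(ξ * n))
        rw [← hexparg] at this
        refine this.trans ?_
        rw [abs_neg, abs_mul]
      set Y := ‖Complex.exp (-(Complex.I * (ξ:ℂ) * (n:ℂ))) - 1‖ with hY
      have hYnn : 0 ≤ Y := norm_nonneg _
      have ha : (|ξ| ^ (-q)) ^ 2 = |ξ| ^ (-(2*α+1)) := by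
        rw [← Real.rpow_natCast (|ξ| ^ (-q)) 2, ← Real.rpow_mul (abs_nonneg ξ)]
        congr 1
        rw [hq]; push_cast; ring
      have e1 : hk ξ ^ 2 = Y ^ 2 * |ξ| ^ (-(2*α+1)) := by
        rw [hhk]
        simp only []
        rw [mul_pow, ha, ← hY]
        ring
      rw [e1, hM2def]
      apply mul_le_mul_of_nonneg_right _ (Real.rpow_nonneg (abs_nonneg ξ) _)
      apply le_min
      · nlinarith
      · have : (|ξ| * |(n:ℝ)|) ^ 2 = (n:ℝ)^2 * ξ^2 := by
          rw [mul_pow, _root_.sq_abs, _root_.sq_abs]; ring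
        nlinarith
  have hhksqint : Integrable (fun ξ => hk ξ ^ 2) μ := by
    apply hM2int.mono' ((hhkmeas.pow_const 2).aestronglyMeasurable)
    apply Filter.Eventually.of_forall
    intro ξ
    rw [Real.norm_eq_abs, _root_.abs_of_nonneg (sq_nonneg _)]
    exact hhksq_le ξ
  have hhkmem : MemLp hk (ENNReal.ofReal 2) μ := by
    rw [show ((ENNReal.ofReal 2) : ENNReal) = 2 by simp]
    exact (memLp_two_iff_integrable_sq hhkmeas.aestronglyMeasurable).mpr hhksqint
  have holder := MeasureTheory.integral_mul_le_Lp_mul_Lq_of_nonneg hpq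
    (Filter.Eventually.of_forall fun ξ =>
      mul_nonneg (Real.rpow_nonneg (abs_nonneg ξ) _) (norm_nonneg _))
    (Filter.Eventually.of_forall fun ξ =>
      mul_nonneg (Real.rpow_nonneg (abs_nonneg ξ) _) (norm_nonneg _))
    hgmem hhkmem
  -- identify ∫ g²
  have hgsq : ∀ ξ : ℝ, g ξ ^ (2:ℝ) = |ξ| ^ (2*α+1) * ‖intFT f ξ‖ ^ 2 := by
    intro ξ
    simp only [hg]
    rw [Real.mul_rpow (Real.rpow_nonneg (abs_nonneg ξ) _) (norm_nonneg _),
      ← Real.rpow_mul (abs_nonneg ξ), show q * 2 = 2*α+1 by rw [hq]; ring,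
      Real.rpow_two]
  have e4 : (∫ ξ, g ξ ^ (2:ℝ) ∂μ)
      = ∫ ξ in (-Real.pi)..Real.pi, |ξ| ^ (2*α+1) * ‖intFT f ξ‖ ^ 2 := by
    rw [intervalIntegral.integral_of_le hle]
    exact MeasureTheory.integral_congr_ae (Filter.Eventually.of_forall hgsq)
  have e5 : (∫ ξ, hk ξ ^ (2:ℝ) ∂μ) ≤ (1/(1-α) + 4/α) * |(n:ℝ)| ^ (2*α) := by
    have h1 : (∫ ξ, hk ξ ^ (2:ℝ) ∂μ) ≤ ∫ ξ, M2 ξ ∂μ := by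
      apply MeasureTheory.integral_mono_of_nonneg
      · exact Filter.Eventually.of_forall fun ξ => Real.rpow_nonneg
          (mul_nonneg (Real.rpow_nonneg (abs_nonneg ξ) _) (norm_nonneg _)) _
      · exact hM2int
      · apply Filter.Eventually.of_forall
        intro ξ
        show hk ξ ^ (2:ℝ) ≤ M2 ξ
        rw [Real.rpow_two]
        exact hhksq_le ξ
    refine h1.trans ?_
    have h2 := (M2_bound hα0 hα1 hn0).2
    rwa [intervalIntegral.integral_of_le hle] at h2
  have hsqnn : (0:ℝ) ≤ ∫ ξ, hk ξ ^ (2:ℝ) ∂μ :=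
    MeasureTheory.integral_nonneg fun ξ => Real.rpow_nonneg
      (mul_nonneg (Real.rpow_nonneg (abs_nonneg ξ) _) (norm_nonneg _)) _
  -- assemble
  have hfin : |f k - f m| * (2*Real.pi)
      ≤ S * (((1/(1-α) + 4/α)) ^ (1/2:ℝ) * |(n:ℝ)| ^ α) := by
    refine step2.trans (holder.trans ?_)
    rw [e4, ← hS]
    have b2 : (∫ ξ, hk ξ ^ (2:ℝ) ∂μ) ^ ((1:ℝ)/2)
        ≤ ((1/(1-α) + 4/α) * |(n:ℝ)| ^ (2*α)) ^ ((1:ℝ)/2) :=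
      Real.rpow_le_rpow hsqnn e5 (by norm_num)
    have b3 : ((1/(1-α) + 4/α) * |(n:ℝ)| ^ (2*α)) ^ ((1:ℝ)/2)
        = ((1/(1-α) + 4/α)) ^ (1/2:ℝ) * |(n:ℝ)| ^ α := by
      rw [Real.mul_rpow hKpos.le (Real.rpow_nonneg (abs_nonneg _) _)]
      rw [← Real.rpow_mul (abs_nonneg _), show 2*α*(1/2 : ℝ) = α by ring]
    exact mul_le_mul_of_nonneg_left (b2.trans_eq b3) hSnn
  -- conclude
  have h2π : (0:ℝ) < 2*Real.pi := by linarith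
  have hcast : ((n:ℤ):ℝ) = (k:ℝ) - (m:ℝ) := by rw [hn]; push_cast; ring
  rw [show |(k:ℝ) - (m:ℝ)| = |((n:ℤ):ℝ)| by rw [hcast]]
  have hfin2 := (le_div_iff₀ h2π).mpr hfin
  refine hfin2.trans (le_of_eq ?_)
  field_simp


lemma extend_holder {α : ℝ} (hα0 : 0 < α) (hα1 : α < 1) {f : ℝ → ℝ} {D : ℝ} (hD : 0 ≤ D)
    (hint : ∀ k m : ℤ, |f k - f m| ≤ D * |(k:ℝ) - (m:ℝ)| ^ α)
    (hlin : ∀ k : ℤ, ∀ x ∈ Set.Icc (k : ℝ) ((k : ℝ) + 1),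
        f x = (1 - (x - (k : ℝ))) * f k + (x - (k : ℝ)) * f ((k : ℝ) + 1))
    {x y : ℝ} (hxy : x < y) : |f x - f y| ≤ 3 * D * (y - x) ^ α := by
  have hself : ∀ t : ℝ, 0 ≤ t → t ≤ 1 → t ≤ t ^ α := by
    intro t h0 h1
    rcases eq_or_lt_of_le h0 with rfl | h0'
    · rw [Real.zero_rpow hα0.ne']
    · calc t = t ^ (1:ℝ) := (Real.rpow_one t).symm
        _ ≤ t ^ α := Real.rpow_le_rpow_of_exponent_ge h0' h1 hα1.le
  have hΔ : ∀ j : ℤ, |f ((j:ℝ)+1) - f j| ≤ D := by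
    intro j
    have h := hint (j+1) j
    push_cast at h
    simpa [Real.one_rpow] using h
  -- interpolation identities
  have hfk : ∀ (k : ℤ) (z : ℝ), z ∈ Set.Icc (k:ℝ) ((k:ℝ)+1) →
      f z - f k = (z - k) * (f ((k:ℝ)+1) - f k) := by
    intro k z hz; rw [hlin k z hz]; ring
  have hfk1 : ∀ (k : ℤ) (z : ℝ), z ∈ Set.Icc (k:ℝ) ((k:ℝ)+1) →
      f z - f ((k:ℝ)+1) = (z - k - 1) * (f ((k:ℝ)+1) - f k) := by
    intro k z hz; rw [hlin k z hz]; ring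
  set k : ℤ := ⌊x⌋ with hkdef
  set m : ℤ := ⌊y⌋ with hmdef
  have hxmem : x ∈ Set.Icc (k:ℝ) ((k:ℝ)+1) := ⟨Int.floor_le x, (Int.lt_floor_add_one x).le⟩
  have hymem : y ∈ Set.Icc (m:ℝ) ((m:ℝ)+1) := ⟨Int.floor_le y, (Int.lt_floor_add_one y).le⟩
  have hyx0 : 0 < y - x := sub_pos.mpr hxy
  have hrnn : 0 ≤ (y - x) ^ α := Real.rpow_nonneg hyx0.le _
  have hkm : k ≤ m := Int.floor_le_floor hxy.le
  rcases eq_or_lt_of_le hkm with heq | hlt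
  · -- same interval
    have hymem' : y ∈ Set.Icc (k:ℝ) ((k:ℝ)+1) := by rw [heq]; exact hymem
    have hid : f x - f y = (x - y) * (f ((k:ℝ)+1) - f k) := by
      have h1 := hfk k x hxmem
      have h2 := hfk k y hymem'
      nlinarith [h1, h2]
    have hyx1 : y - x ≤ 1 := by
      have := hymem'.2; have := hxmem.1; linarith
    rw [hid, abs_mul, abs_sub_comm x y, abs_of_pos hyx0]
    calc (y - x) * |f ((k:ℝ)+1) - f k| ≤ (y - x) ^ α * D :=
          mul_le_mul (hself _ hyx0.le hyx1) (hΔ k) (abs_nonneg _) hrnn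
      _ ≤ 3 * D * (y - x) ^ α := by nlinarith
  · -- different intervals : k < m, so k + 1 ≤ m
    have hk1m : ((k:ℝ)+1) ≤ (m:ℝ) := by exact_mod_cast Int.add_one_le_of_lt hlt
    have hxk1 : x < (k:ℝ)+1 := Int.lt_floor_add_one x
    have hmy : (m:ℝ) ≤ y := Int.floor_le y
    -- piece A
    have hA : |f x - f ((k:ℝ)+1)| ≤ (y - x) ^ α * D := by
      have hid := hfk1 k x hxmem
      rw [hid, abs_mul]
      have habs : |x - (k:ℝ) - 1| = (k:ℝ) + 1 - x := by
        rw [abs_of_nonpos (by linarith)]; ring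
      rw [habs]
      have h1 : (k:ℝ) + 1 - x ≤ ((k:ℝ)+1-x) ^ α := hself _ (by linarith) (by
        have := hxmem.1; linarith)
      have h2 : ((k:ℝ)+1-x) ^ α ≤ (y - x) ^ α :=
        Real.rpow_le_rpow (by linarith) (by linarith) hα0.le
      exact mul_le_mul (h1.trans h2) (hΔ k) (abs_nonneg _) hrnn
    -- piece B
    have hB : |f ((k:ℝ)+1) - f (m:ℝ)| ≤ (y - x) ^ α * D := by
      have h := hint (k+1) m
      push_cast at h
      have habs : |(k:ℝ) + 1 - (m:ℝ)| = (m:ℝ) - (k:ℝ) - 1 := by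
        rw [abs_of_nonpos (by linarith)]; ring
      rw [habs] at h
      have h2 : ((m:ℝ) - (k:ℝ) - 1) ^ α ≤ (y - x) ^ α :=
        Real.rpow_le_rpow (by linarith) (by linarith) hα0.le
      calc |f ((k:ℝ)+1) - f (m:ℝ)| ≤ D * ((m:ℝ) - (k:ℝ) - 1) ^ α := h
        _ ≤ D * (y - x) ^ α := mul_le_mul_of_nonneg_left h2 hD
        _ = (y - x) ^ α * D := by ring
    -- piece C
    have hC : |f (m:ℝ) - f y| ≤ (y - x) ^ α * D := by
      have hid := hfk m y hymem
      rw [abs_sub_comm, hid, abs_mul]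
      have habs : |y - (m:ℝ)| = y - (m:ℝ) := abs_of_nonneg (by linarith)
      rw [habs]
      have h1 : y - (m:ℝ) ≤ (y - (m:ℝ)) ^ α := hself _ (by linarith) (by
        have := hymem.2; linarith)
      have h2 : (y - (m:ℝ)) ^ α ≤ (y - x) ^ α :=
        Real.rpow_le_rpow (by linarith) (by linarith) hα0.le
      exact mul_le_mul (h1.trans h2) (hΔ m) (abs_nonneg _) hrnn
    calc |f x - f y| ≤ |f x - f ((k:ℝ)+1)| + |f ((k:ℝ)+1) - f (m:ℝ)| + |f (m:ℝ) - f y| := by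
          have t1 := abs_sub_le (f x) (f ((k:ℝ)+1)) (f y)
          have t2 := abs_sub_le (f ((k:ℝ)+1)) (f (m:ℝ)) (f y)
          linarith
      _ ≤ 3 * ((y - x) ^ α * D) := by linarith
      _ = 3 * D * (y - x) ^ α := by ring

theorem stmt_15 (α : ℝ) (hα0 : 0 < α) (hα1 : α < 1) :
    ∃ C : ℝ, ∀ f : ℝ → ℝ,
      Summable (fun k : ℤ => |f k|) →
      (∀ k : ℤ, ∀ x ∈ Set.Icc (k : ℝ) ((k : ℝ) + 1),
        f x = (1 - (x - (k : ℝ))) * f k + (x - (k : ℝ)) * f ((k : ℝ) + 1)) →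
      ∀ x y : ℝ, x ≠ y →
        |f x - f y| ≤
          C * (∫ ξ in (-Real.pi)..Real.pi, |ξ| ^ (2 * α + 1) * ‖intFT f ξ‖ ^ 2)
              ^ (1 / 2 : ℝ) * |x - y| ^ α := by
  have h1α : (0:ℝ) < 1 - α := by linarith
  have hKpos : (0:ℝ) < 1/(1-α) + 4/α := by positivity
  refine ⟨3 * ((2*Real.pi)⁻¹ * ((1/(1-α) + 4/α) ^ (1/2 : ℝ))), ?_⟩
  intro f hf hlin x y hxy
  set S : ℝ := (∫ ξ in (-Real.pi)..Real.pi,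
      |ξ| ^ (2 * α + 1) * ‖intFT f ξ‖ ^ 2) ^ (1/2 : ℝ) with hS
  have hle : -Real.pi ≤ Real.pi := by linarith [Real.pi_pos]
  have hip : (0:ℝ) ≤ ∫ ξ in (-Real.pi)..Real.pi,
      |ξ| ^ (2 * α + 1) * ‖intFT f ξ‖ ^ 2 := by
    apply intervalIntegral.integral_nonneg hle
    intro t _
    positivity
  have hSnn : 0 ≤ S := Real.rpow_nonneg hip _
  set Cint : ℝ := (2*Real.pi)⁻¹ * ((1/(1-α) + 4/α) ^ (1/2 : ℝ)) with hCint
  have hCnn : 0 ≤ Cint :=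
    mul_nonneg (inv_nonneg.mpr (by linarith [Real.pi_pos])) (Real.rpow_nonneg hKpos.le _)
  have hDnn : 0 ≤ Cint * S := mul_nonneg hCnn hSnn
  have hint2 : ∀ k m : ℤ, |f k - f m| ≤ (Cint * S) * |(k:ℝ) - (m:ℝ)| ^ α := by
    intro k m
    have h := int_holder hα0 hα1 hf k m
    calc |f k - f m|
        ≤ (2*Real.pi)⁻¹ * ((1/(1-α) + 4/α) ^ (1/2 : ℝ)) * S * |(k:ℝ) - (m:ℝ)| ^ α := h
      _ = (Cint * S) * |(k:ℝ) - (m:ℝ)| ^ α := by rw [hCint]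
  rcases lt_or_gt_of_ne hxy with h | h
  · have hmain := extend_holder hα0 hα1 hDnn hint2 hlin h
    rw [show |x - y| = y - x by rw [abs_sub_comm]; exact _root_.abs_of_pos (by linarith)]
    refine hmain.trans (le_of_eq (by ring))
  · have hmain := extend_holder hα0 hα1 hDnn hint2 hlin h
    rw [show |x - y| = x - y from _root_.abs_of_pos (by linarith), abs_sub_comm]
    refine hmain.trans (le_of_eq (by ring))
end
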